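/- arXiv:2004.01654 — 2 statements merged into one kernel-verified Lean document; each statement's English description precedes it below -/
import Mathlib

section
/- Let G be a graph on n vertices, let k be a nonnegative real, and let d be an integer with 2 ≤ d ≤ n and n ≤ 2(d−1). Suppose t : E(G) → ℝ≥0 is a weight function such that for every vertex subset S with |S| = n−d+1, the total weight of edges with one endpoint in S and the other outside S is at least k. Then the total weight ∑_{e ∈ E(G)} t(e) ≥ k·n·(n−1) / (2·(n−d+1)·(d−1)). -/
open scoped Classical

open Finset

private lemma count_one_side {n : ℕ} (u v : Fin n) (huv : u ≠ v) (m : ℕ) (hm : 1 ≤ m) :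
    ((Finset.univ.powersetCard m).filter (fun S : Finset (Fin n) => u ∈ S ∧ v ∉ S)).card
      = Nat.choose (n - 2) (m - 1) := by
  have hcard : (((Finset.univ : Finset (Fin n)).erase u).erase v).card = n - 2 := by
    rw [card_erase_of_mem (by simp [huv.symm]), card_erase_of_mem (by simp)]
    simp [Nat.sub_sub]
  rw [← hcard, ← Finset.card_powersetCard]
  apply Finset.card_nbij' (fun S => S.erase u) (fun T => insert u T)
  · intro S hS
    simp only [mem_coe, mem_filter, mem_powersetCard] at hS
    obtain ⟨⟨_, hScard⟩, huS, hvS⟩ := hS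
    rw [mem_coe, mem_powersetCard]
    constructor
    · intro x hx
      simp only [mem_erase] at hx ⊢
      exact ⟨fun hxv => hvS (hxv ▸ hx.2), hx.1, mem_univ x⟩
    · rw [card_erase_of_mem huS, hScard]
  · intro T hT
    rw [mem_coe, mem_powersetCard] at hT
    obtain ⟨hTsub, hTcard⟩ := hT
    have huT : u ∉ T := fun h => by simpa using (hTsub h)
    have hvT : v ∉ T := fun h => by simpa [huv.symm] using (hTsub h)
    simp only [mem_coe, mem_filter, mem_powersetCard]
    refine ⟨⟨subset_univ _, ?_⟩, mem_insert_self _ _, ?_⟩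
    · rw [card_insert_of_notMem huT, hTcard]
      omega
    · simp only [mem_insert]
      push_neg
      exact ⟨huv.symm, hvT⟩
  · intro S hS
    simp only [mem_coe, mem_filter] at hS
    exact insert_erase hS.2.1
  · intro T hT
    rw [mem_coe, mem_powersetCard] at hT
    have huT : u ∉ T := fun h => by simpa using (hT.1 h)
    exact erase_insert huT

private lemma choose_identity (n m : ℕ) (hn2 : 2 ≤ n) (hm1 : 1 ≤ m) (hmn : m ≤ n - 1) :
    n * (n - 1) * Nat.choose (n - 2) (m - 1) = m * (n - m) * Nat.choose n m := by
  obtain ⟨n', rfl⟩ : ∃ n', n = n' + 2 := ⟨n - 2, by omega⟩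
  obtain ⟨m', rfl⟩ : ∃ m', m = m' + 1 := ⟨m - 1, by omega⟩
  simp only [Nat.add_sub_cancel, Nat.succ_sub_one]
  have h1 : Nat.choose n' m' * (n' + 1) = Nat.choose (n' + 1) m' * (n' + 1 - m') :=
    Nat.choose_mul_succ_eq n' m'
  have h2 : (n' + 2) * Nat.choose (n' + 1) m' = Nat.choose (n' + 2) (m' + 1) * (m' + 1) :=
    Nat.add_one_mul_choose_eq (n' + 1) m'
  have hm' : m' ≤ n' := by omega
  have hsub : n' + 1 - m' = n' - m' + 1 := by omega
  have hsub2 : n' + 2 - (m' + 1) = n' - m' + 1 := by omega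
  rw [hsub] at h1
  rw [hsub2]
  nlinarith [h1, h2]

theorem stmt_11 {n d : ℕ} (hd2 : 2 ≤ d) (hdn : d ≤ n) (hnd : n ≤ 2 * (d - 1))
    (k : ℝ) (hk : 0 ≤ k) (G : SimpleGraph (Fin n))
    (t : Sym2 (Fin n) → ℝ) (ht : ∀ e, 0 ≤ t e)
    (hcut : ∀ S : Finset (Fin n), S.card = n - d + 1 →
      k ≤ ∑ e ∈ G.edgeFinset.filter
        (fun e => ∃ u ∈ S, ∃ v, v ∉ S ∧ e = s(u, v)), t e) :
    k * n * (n - 1) / (2 * ((n - d + 1 : ℕ) : ℝ) * ((d - 1 : ℕ) : ℝ)) ≤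
      ∑ e ∈ G.edgeFinset, t e := by
  obtain ⟨m, hm⟩ : ∃ m, m = n - d + 1 := ⟨_, rfl⟩
  simp only [← hm] at hcut ⊢
  have hm1 : 1 ≤ m := by omega
  have hn2 : 2 ≤ n := le_trans hd2 hdn
  have hmn : m ≤ n - 1 := by omega
  -- counting lemma for each edge
  have key : ∀ e ∈ G.edgeFinset,
      ((Finset.univ.powersetCard m).filter
        (fun S => ∃ u ∈ S, ∃ v, v ∉ S ∧ e = s(u, v))).card
      = 2 * Nat.choose (n - 2) (m - 1) := by
    intro e he
    induction e with
    | h u v =>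
      rw [SimpleGraph.mem_edgeFinset] at he
      have huv : u ≠ v := G.ne_of_adj ((SimpleGraph.mem_edgeSet G).1 he)
      have hiff : ∀ S : Finset (Fin n),
          (∃ a ∈ S, ∃ b, b ∉ S ∧ s(u, v) = s(a, b)) ↔
          ((u ∈ S ∧ v ∉ S) ∨ (v ∈ S ∧ u ∉ S)) := by
        intro S
        constructor
        · rintro ⟨a, ha, b, hb, hab⟩
          rw [Sym2.eq_iff] at hab
          rcases hab with ⟨rfl, rfl⟩ | ⟨rfl, rfl⟩
          · exact Or.inl ⟨ha, hb⟩
          · exact Or.inr ⟨ha, hb⟩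
        · rintro (⟨h1, h2⟩ | ⟨h1, h2⟩)
          · exact ⟨u, h1, v, h2, rfl⟩
          · exact ⟨v, h1, u, h2, by rw [Sym2.eq_swap]⟩
      rw [filter_congr (fun S _ => by rw [hiff S])]
      rw [filter_or]
      rw [card_union_of_disjoint]
      · rw [count_one_side u v huv m hm1, count_one_side v u huv.symm m hm1]
        ring
      · rw [disjoint_filter]
        rintro S _ ⟨h1, h2⟩ ⟨h3, h4⟩
        exact h2 h3
  -- double counting
  have double : ∑ S ∈ Finset.univ.powersetCard m,
      ∑ e ∈ G.edgeFinset.filter (fun e => ∃ u ∈ S, ∃ v, v ∉ S ∧ e = s(u, v)), t e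
      = (2 * Nat.choose (n - 2) (m - 1) : ℕ) * ∑ e ∈ G.edgeFinset, t e := by
    simp_rw [sum_filter]
    rw [Finset.sum_comm]
    rw [Finset.mul_sum]
    apply Finset.sum_congr rfl
    intro e he
    rw [← sum_filter, Finset.sum_const, ← key e he]
    simp [mul_comm]
  -- lower bound on double count
  have hlb : (Nat.choose n m : ℝ) * k ≤ ∑ S ∈ Finset.univ.powersetCard m,
      ∑ e ∈ G.edgeFinset.filter (fun e => ∃ u ∈ S, ∃ v, v ∉ S ∧ e = s(u, v)), t e := by
    calc (Nat.choose n m : ℝ) * k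
        = ∑ _S ∈ (Finset.univ : Finset (Fin n)).powersetCard m, k := by
          rw [Finset.sum_const, nsmul_eq_mul, Finset.card_powersetCard,
            Finset.card_univ, Fintype.card_fin]
      _ ≤ _ := by
          apply Finset.sum_le_sum
          intro S hS
          exact hcut S ((Finset.mem_powersetCard.1 hS).2)
  have hT0 : 0 ≤ ∑ e ∈ G.edgeFinset, t e := Finset.sum_nonneg fun e _ => ht e
  have hmain : (Nat.choose n m : ℝ) * k
      ≤ (2 * Nat.choose (n - 2) (m - 1) : ℕ) * ∑ e ∈ G.edgeFinset, t e := by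
    rw [← double]; exact hlb
  -- binomial identity: n(n-1) * C(n-2, m-1) = m(n-m) * C(n,m)
  have hid : n * (n - 1) * Nat.choose (n - 2) (m - 1) = m * (n - m) * Nat.choose n m :=
    choose_identity n m hn2 hm1 hmn
  have hnm : n - m = d - 1 := by omega
  have hC2pos : (0:ℝ) < (Nat.choose (n - 2) (m - 1) : ℝ) := by
    exact_mod_cast Nat.choose_pos (show m - 1 ≤ n - 2 by omega)
  have hidR : (n:ℝ) * ((n:ℝ) - 1) * (Nat.choose (n - 2) (m - 1) : ℝ)
      = (m:ℝ) * ((d - 1 : ℕ) : ℝ) * (Nat.choose n m : ℝ) := by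
    have h := congrArg (Nat.cast (R := ℝ)) hid
    rw [hnm] at h
    push_cast [Nat.cast_sub (show 1 ≤ n by omega)] at h
    linarith [h]
  have hmpos : (0:ℝ) < (m:ℝ) := by exact_mod_cast hm1
  have hdpos : (0:ℝ) < ((d - 1 : ℕ) : ℝ) := by
    have : 1 ≤ d - 1 := by omega
    exact_mod_cast lt_of_lt_of_le zero_lt_one (by exact_mod_cast this)
  rw [div_le_iff₀ (by positivity)]
  have hmul := mul_le_mul_of_nonneg_left hmain
    (show (0:ℝ) ≤ (m:ℝ) * ((d - 1 : ℕ) : ℝ) by positivity)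
  push_cast at hmain hmul
  nlinarith [hmul, hidR, hC2pos, hT0, mul_pos hmpos hdpos]
end

section
/- For every ε > 0 and all sufficiently large N, there exists a subset M ⊆ {1, …, N} free of nontrivial 3-term arithmetic progressions with |M| ≥ N^(1−ε). -/
open Real Finset

theorem stmt_17 (ε : ℝ) (hε : 0 < ε) :
    ∃ N₀ : ℕ, ∀ N : ℕ, N₀ ≤ N →
      ∃ M : Finset ℕ, M ⊆ Finset.Icc 1 N ∧
        (∀ α ∈ M, ∀ β ∈ M, ∀ γ ∈ M, α + β = 2 * γ → α = β ∧ β = γ) ∧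
        (N : ℝ) ^ (1 - ε) ≤ M.card := by
  refine ⟨⌈Real.exp ((4/ε)^2)⌉₊ + 1, fun N hN => ?_⟩
  obtain ⟨t, hts, htc, htf⟩ := rothNumberNat_spec N
  refine ⟨t.image (· + 1), ?_, ?_, ?_⟩
  · intro x hx
    simp only [mem_image] at hx
    obtain ⟨a, ha, rfl⟩ := hx
    have := Finset.mem_range.1 (hts ha)
    simp only [Finset.mem_Icc]
    omega
  · intro α hα β hβ γ hγ h
    simp only [mem_image] at hα hβ hγ
    obtain ⟨a, ha, rfl⟩ := hα
    obtain ⟨b, hb, rfl⟩ := hβ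
    obtain ⟨c, hc, rfl⟩ := hγ
    have hac : a + b = c + c := by omega
    have h1 : a = c := htf (by exact_mod_cast ha) (by exact_mod_cast hc)
      (by exact_mod_cast hb) hac
    omega
  · have hcard : (t.image (· + 1)).card = t.card := by
      exact Finset.card_image_of_injective _ (add_left_injective 1)
    rw [hcard, htc]
    have hN1 : 1 ≤ N := by omega
    have hNpos : (0:ℝ) < N := by exact_mod_cast hN1
    have hNe : Real.exp ((4/ε)^2) ≤ N := by
      have : ⌈Real.exp ((4/ε)^2)⌉₊ ≤ N := by omega
      calc Real.exp ((4/ε)^2) ≤ ⌈Real.exp ((4/ε)^2)⌉₊ := Nat.le_ceil _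
        _ ≤ N := by exact_mod_cast this
    set L := Real.log N with hL
    have hLc : (4/ε)^2 ≤ L := (Real.le_log_iff_exp_le hNpos).2 hNe
    have hLpos : 0 ≤ L := le_trans (by positivity) hLc
    have hsq : 4/ε ≤ Real.sqrt L := by
      rw [show (4/ε) = Real.sqrt ((4/ε)^2) from (Real.sqrt_sq (by positivity)).symm]
      exact Real.sqrt_le_sqrt hLc
    have key : 4 * Real.sqrt L ≤ ε * L := by
      have h4 : 4 ≤ ε * Real.sqrt L := by
        rw [div_le_iff₀ hε] at hsq; linarith [hsq]
      calc 4 * Real.sqrt L ≤ (ε * Real.sqrt L) * Real.sqrt L :=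
            mul_le_mul_of_nonneg_right h4 (Real.sqrt_nonneg _)
        _ = ε * (Real.sqrt L * Real.sqrt L) := by ring
        _ = ε * L := by rw [Real.mul_self_sqrt hLpos]
    calc (N:ℝ) ^ (1 - ε) = Real.exp (L * (1 - ε)) := Real.rpow_def_of_pos hNpos _
      _ ≤ Real.exp (L + (-4) * Real.sqrt L) := by
          apply Real.exp_le_exp.2; nlinarith
      _ = (N:ℝ) * Real.exp (-4 * Real.sqrt L) := by
          rw [Real.exp_add, Real.exp_log hNpos]
      _ ≤ rothNumberNat N := Behrend.roth_lower_bound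
end
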